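/- arXiv:1905.07397 — 3 statements merged into one kernel-verified Lean document; each statement's English description precedes it below -/
import Mathlib

section
/- For all real p with 0 < p < 1/2, the quantity (1-p)·p²/(1 - (1-p)·p·(3-2p)) is strictly less than p·(1-p), with equality holding when p = 0 or p = 1/2. -/
/-- For all real `p` with `0 < p < 1/2`, the quantity
`(1-p)·p²/(1 - (1-p)·p·(3-2p))` is strictly less than `p·(1-p)`,
with equality holding when `p = 0` or `p = 1/2`. -/
theorem payforward_bound_lt_honest :
    (∀ p : ℝ, 0 < p → p < 1/2 →
      (1 - p) * p ^ 2 / (1 - (1 - p) * p * (3 - 2 * p)) < p * (1 - p)) ∧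
    ((1 - (0:ℝ)) * 0 ^ 2 / (1 - (1 - 0) * 0 * (3 - 2 * 0)) = 0 * (1 - 0)) ∧
    ((1 - (1/2:ℝ)) * (1/2) ^ 2 / (1 - (1 - 1/2) * (1/2) * (3 - 2 * (1/2)))
      = (1/2) * (1 - 1/2)) := by
  refine ⟨?_, by norm_num, by norm_num⟩
  intro p hp hp2
  have hD : 0 < 1 - (1 - p) * p * (3 - 2 * p) := by nlinarith [sq_nonneg (1 - p), sq_nonneg p]
  rw [div_lt_iff₀ hD]
  have h1 : (0:ℝ) < 1 - p := by linarith
  have key : 0 < p * (1 - p) * ((1 - p) ^ 2 * (1 - 2 * p)) := by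
    have h2 : (0:ℝ) < 1 - 2 * p := by linarith
    positivity
  nlinarith [key]
end

section
/- Let 0 < p < 1/2 and 0 < α ≤ 1, 0 < β ≤ (p/(1-p))². Define π = (α - α·p)/(α - α·p + β) and Q(α,β) = π·β / ((1-π)·(2(1-α)(1-p) + α(1-p) + p) + π·(2β + 1 - β)). Then Q(α,β) ≤ (1-p)·p²/(1 - (1-p)·p·(3-2p)). -/
/-- For `0 < p < 1/2`, `0 < α ≤ 1`, `0 < β ≤ (p/(1-p))²`, with
`π = (α - αp)/(α - αp + β)` and
`Q(α,β) = πβ / ((1-π)(2(1-α)(1-p) + α(1-p) + p) + π(2β + 1 - β))`,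
we have `Q(α,β) ≤ (1-p)p²/(1-(1-p)p(3-2p))`. -/
theorem Q_le_bound (p α β : ℝ) (hp0 : 0 < p) (hp1 : p < 1/2)
    (hα0 : 0 < α) (hα1 : α ≤ 1) (hβ0 : 0 < β) (hβ1 : β ≤ (p / (1 - p)) ^ 2) :
    ((α - α * p) / (α - α * p + β)) * β /
      ((1 - (α - α * p) / (α - α * p + β)) * (2 * (1 - α) * (1 - p) + α * (1 - p) + p)
        + ((α - α * p) / (α - α * p + β)) * (2 * β + 1 - β))
      ≤ (1 - p) * p ^ 2 / (1 - (1 - p) * p * (3 - 2 * p)) := by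
  have h1p : 0 < 1 - p := by linarith
  have hA : 0 < α - α * p := by nlinarith
  have hAβ : 0 < α - α * p + β := by linarith
  have hD : 0 < 2 * (1 - α) * (1 - p) + α * (1 - p) + p := by nlinarith
  have hE : 0 < β * (2 * (1 - α) * (1 - p) + α * (1 - p) + p)
      + (α - α * p) * (β + 1) := by positivity
  have hR : 0 < 1 - (1 - p) * p * (3 - 2 * p) := by
    nlinarith [sq_nonneg (2 * p - 3 / 4)]
  have hβ1' : β * (1 - p) ^ 2 ≤ p ^ 2 := by
    have h := mul_le_mul_of_nonneg_right hβ1 (sq_nonneg (1 - p))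
    rwa [div_pow, div_mul_cancel₀] at h
    positivity
  have heq : ((α - α * p) / (α - α * p + β)) * β /
      ((1 - (α - α * p) / (α - α * p + β)) * (2 * (1 - α) * (1 - p) + α * (1 - p) + p)
        + ((α - α * p) / (α - α * p + β)) * (2 * β + 1 - β))
      = (α - α * p) * β / (β * (2 * (1 - α) * (1 - p) + α * (1 - p) + p)
          + (α - α * p) * (β + 1)) := by
    have hden : 0 < (1 - (α - α * p) / (α - α * p + β)) * (2 * (1 - α) * (1 - p) + α * (1 - p) + p)
        + ((α - α * p) / (α - α * p + β)) * (2 * β + 1 - β) := by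
      have h1π : 0 < 1 - (α - α * p) / (α - α * p + β) := by
        rw [sub_pos, div_lt_one hAβ]; linarith
      have hπ : 0 < (α - α * p) / (α - α * p + β) := div_pos hA hAβ
      nlinarith [mul_pos h1π hD, mul_pos hπ (show (0:ℝ) < 2 * β + 1 - β by linarith)]
    rw [div_eq_div_iff hden.ne' hE.ne']
    field_simp
    ring_nf
  rw [heq, div_le_div_iff₀ hE hR]
  have h3 : 0 ≤ p ^ 2 * β * (1 - p) * ((1 - α) * (2 - p)) := by
    have : (0:ℝ) ≤ 1 - α := by linarith
    have : (0:ℝ) ≤ 2 - p := by linarith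
    positivity
  have h4 : 0 ≤ (1 - p) * (α - α * p) * (p ^ 2 - β * (1 - p) ^ 2) := by
    apply mul_nonneg (by positivity)
    linarith
  nlinarith [h3, h4]
end

section
/- For 0 < p ≤ 0.344 and 0 ≤ w ≤ 1: 1 - p(1-p)·w ≥ w·p/(1-p). -/
/-- For `0 < p ≤ 0.344` and `0 ≤ w ≤ 1`:
`1 - p(1-p)w ≥ w·p/(1-p)`. -/
theorem release_dominates_capitulation (p w : ℝ) (hp0 : 0 < p) (hp1 : p ≤ 0.344)
    (hw0 : 0 ≤ w) (hw1 : w ≤ 1) :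
    1 - p * (1 - p) * w ≥ w * p / (1 - p) := by
  have h1 : (0:ℝ) < 1 - p := by linarith
  rw [ge_iff_le, div_le_iff₀ h1]
  have key : p * (1 + (1-p)^2) ≤ 1 - p := by nlinarith [sq_nonneg p, sq_nonneg (1-p)]
  have hw : w * (p * (1 + (1-p)^2)) ≤ 1 * (1 - p) := by
    apply mul_le_mul hw1 key (by positivity) (by norm_num)
  nlinarith [hw]
end
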